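/- Let A be an n×n matrix with entries in ℝ ∪ {-∞} and let λ ∈ ℝ. Then G(λA) ∈ Γ if and only if λ ≤ -mcm(A) (an inequality of extended reals, where -(-∞) = +∞), and G(λ^{-1}A) ∈ Γ if and only if λ ≥ mcm(A). -/

import Mathlib

open scoped Classical

namespace NCP

/-- Square max-plus matrices over the extended reals. -/
abbrev MPMat (n : ℕ) := Fin n → Fin n → EReal

/-- Max-plus matrix product: `(A ⊗ B) i j = ⨆ k, A i k + B k j`. -/
noncomputable def mpMul {n : ℕ} (A B : MPMat n) : MPMat n :=
  fun i j => ⨆ k : Fin n, A i k + B k j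

/-- Max-plus identity matrix `E_⊗`. -/
noncomputable def mpId {n : ℕ} : MPMat n :=
  fun i j => if i = j then 0 else ⊥

/-- Max-plus matrix powers. -/
noncomputable def mpPow {n : ℕ} (A : MPMat n) : ℕ → MPMat n
  | 0 => mpId
  | k + 1 => mpMul A (mpPow A k)

/-- Entrywise Kleene star `(A^*) i j = ⨆ k, (A^k) i j`. -/
noncomputable def mpStar {n : ℕ} (A : MPMat n) : MPMat n :=
  fun i j => ⨆ k : ℕ, mpPow A k i j

/-- Entrywise max of two matrices, `A ⊕ B`. -/
noncomputable def mpAdd {n : ℕ} (A B : MPMat n) : MPMat n :=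
  fun i j => max (A i j) (B i j)

/-- `G(A) ∈ Γ`: all diagonal entries of all positive powers are ≤ 0. -/
def InGamma {n : ℕ} (A : MPMat n) : Prop :=
  ∀ i : Fin n, ∀ k : ℕ, 1 ≤ k → mpPow A k i i ≤ 0

/-- `λA`: the matrix with entries `λ + A i j`. -/
noncomputable def sm {n : ℕ} (lam : ℝ) (A : MPMat n) : MPMat n :=
  fun i j => (lam : EReal) + A i j

/-- Division of an extended real by a natural number (±∞ map to ±∞). -/
noncomputable def edivNat (x : EReal) (k : ℕ) : EReal :=
  if x = ⊤ then ⊤ else if x = ⊥ then ⊥ else ((x.toReal / k : ℝ) : EReal)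

/-- The maximum circuit mean of a max-plus matrix. -/
noncomputable def mcm {n : ℕ} (M : MPMat n) : EReal :=
  ⨆ k ∈ Finset.Icc 1 n, ⨆ i : Fin n, edivNat (mpPow M k i i) k

/-- Morphism from words to max-plus matrices determined by `f` on letters. -/
noncomputable def wordMat {α : Type*} {n : ℕ} (f : α → MPMat n) : List α → MPMat n
  | [] => mpId
  | z :: s => mpMul (f z) (wordMat f s)

/-- Entrywise extension of `wordMat` to languages: `μ(L) i j = ⨆ s ∈ L, μ(s) i j`. -/
noncomputable def langMat {α : Type*} {n : ℕ} (f : α → MPMat n) (L : Language α) : MPMat n :=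
  fun i j => ⨆ s ∈ L, wordMat f s i j

/-- The recursive sequence of languages `S(L₁, L₂, k)`. -/
def SL {α : Type*} (L1 L2 : Language α) : ℕ → Language α
  | 0 => 1
  | k + 1 => L1 * SL L1 L2 k * SL L1 L2 k * L2 + L2 * SL L1 L2 k * SL L1 L2 k * L1 + 1



/-! ### Auxiliary lemmas -/

theorem ereal_real_add_le_iff (x : ℝ) {y C : EReal} :
    (x : EReal) + y ≤ C ↔ y ≤ ((-x : ℝ) : EReal) + C := by
  constructor
  · intro h
    calc y = ((-x : ℝ) : EReal) + ((x : EReal) + y) := by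
            rw [← add_assoc, ← EReal.coe_add, neg_add_cancel, EReal.coe_zero, zero_add]
      _ ≤ _ := add_le_add (le_refl _) h
  · intro h
    calc (x:EReal) + y ≤ (x:EReal) + (((-x:ℝ):EReal) + C) := add_le_add (le_refl _) h
      _ = C := by rw [← add_assoc, ← EReal.coe_add, add_neg_cancel, EReal.coe_zero, zero_add]

theorem ereal_add_iSup {ι : Sort*} (x : ℝ) (f : ι → EReal) :
    (x : EReal) + ⨆ i, f i = ⨆ i, ((x : EReal) + f i) := by
  apply le_antisymm
  · rw [ereal_real_add_le_iff]
    apply iSup_le; intro i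
    rw [← ereal_real_add_le_iff]
    exact le_iSup (fun i => (x:EReal) + f i) i
  · apply iSup_le; intro i
    exact add_le_add (le_refl _) (le_iSup f i)

theorem ereal_coe_add_ne_top (c : ℝ) {x : EReal} (hx : x ≠ ⊤) : (c:EReal) + x ≠ ⊤ := by
  induction x using EReal.rec
  · simp [EReal.add_bot]
  · rw [← EReal.coe_add]; exact EReal.coe_ne_top _
  · exact absurd rfl hx

/-- Weight of the walk `p 0, p 1, …, p k`. -/
noncomputable def W {n : ℕ} (B : MPMat n) (p : ℕ → Fin n) (k : ℕ) : EReal :=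
  ∑ t ∈ Finset.range k, B (p t) (p (t+1))

theorem W_add {n : ℕ} (B : MPMat n) (p : ℕ → Fin n) (a r : ℕ) :
    W B p (a + r) = W B p a + W B (fun t => p (a + t)) r := by
  unfold W
  induction r with
  | zero => simp
  | succ r ih =>
      rw [Nat.add_succ, Finset.sum_range_succ, Finset.sum_range_succ, ih, add_assoc]
      rfl

theorem W_congr {n : ℕ} (B : MPMat n) {p q : ℕ → Fin n} (k : ℕ)
    (h : ∀ t ≤ k, p t = q t) : W B p k = W B q k := by
  unfold W
  apply Finset.sum_congr rfl
  intro t ht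
  rw [Finset.mem_range] at ht
  rw [h t (by omega), h (t+1) (by omega)]

theorem walk_le_pow {n : ℕ} (B : MPMat n) :
    ∀ (k : ℕ) (p : ℕ → Fin n), W B p k ≤ mpPow B k (p 0) (p k) := by
  intro k
  induction k with
  | zero => intro p; simp [W, mpPow, mpId]
  | succ k ih =>
    intro p
    have hW : W B p (k+1) = B (p 0) (p 1) + W B (fun t => p (t+1)) k := by
      unfold W
      rw [Finset.sum_range_succ', add_comm]
    rw [hW]
    have h1 : B (p 0) (p 1) + W B (fun t => p (t+1)) k
        ≤ B (p 0) (p 1) + mpPow B k (p 1) (p (k+1)) :=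
      add_le_add (le_refl _) (ih (fun t => p (t+1)))
    exact h1.trans (le_iSup (fun l => B (p 0) l + mpPow B k l (p (k+1))) (p 1))

theorem pow_le_of_walks {n : ℕ} (B : MPMat n) (hB : ∀ i j, B i j ≠ ⊤) :
    ∀ (k : ℕ) (i j : Fin n) (C : EReal),
      (∀ p : ℕ → Fin n, p 0 = i → p k = j → W B p k ≤ C) → mpPow B k i j ≤ C := by
  intro k
  induction k with
  | zero =>
    intro i j C h
    by_cases hij : i = j
    · subst hij
      have := h (fun _ => i) rfl rfl
      simpa [W, mpPow, mpId] using this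
    · simp [mpPow, mpId, hij]
  | succ k ih =>
    intro i j C h
    show (⨆ l, B i l + mpPow B k l j) ≤ C
    apply iSup_le; intro l
    by_cases hbot : B i l = ⊥
    · rw [hbot, EReal.bot_add]; exact bot_le
    · have hx : ((B i l).toReal : EReal) = B i l := EReal.coe_toReal (hB i l) hbot
      rw [← hx, ereal_real_add_le_iff]
      apply ih l j
      intro p hp0 hpk
      rw [← ereal_real_add_le_iff, hx]
      set q : ℕ → Fin n := fun t => Nat.casesOn t i p with hq
      have hWq : W B q (k+1) = B i l + W B p k := by
        unfold W
        rw [Finset.sum_range_succ']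
        have h0 : B (q 0) (q (0+1)) = B i l := by rw [hq]; simp [hp0]
        have hs : ∀ t, B (q (t+1)) (q (t+1+1)) = B (p t) (p (t+1)) := by
          intro t; rfl
        simp only [hs]
        rw [h0, add_comm]
      rw [← hWq]
      exact h q rfl hpk

theorem closed_walk_le {n : ℕ} (B : MPMat n)
    (H : ∀ i : Fin n, ∀ k : ℕ, 1 ≤ k → k ≤ n → mpPow B k i i ≤ 0) :
    ∀ k : ℕ, ∀ p : ℕ → Fin n, 1 ≤ k → p k = p 0 → W B p k ≤ 0 := by
  intro k
  induction k using Nat.strong_induction_on with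
  | _ k ih =>
  intro p hk hpk
  by_cases hkn : k ≤ n
  · have h1 := walk_le_pow B k p
    rw [hpk] at h1
    exact h1.trans (H (p 0) k hk hkn)
  · push_neg at hkn
    have key : ∀ a b : ℕ, a < b → b ≤ n → p a = p b → W B p k ≤ 0 := by
      intro a b hab hbn hpab
      set m := b - a with hm
      set r := k - b with hr
      have hb : b = a + m := by omega
      have hk' : k = a + (m + r) := by omega
      have hm1 : 1 ≤ m := by omega
      have hr1 : 1 ≤ r := by omega
      have hmid : W B (fun t => p (a + t)) m ≤ 0 := by
        have h1 := walk_le_pow B m (fun t => p (a + t))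
        have e1 : p (a + 0) = p a := by norm_num
        have e2 : p (a + m) = p a := by rw [← hb, ← hpab]
        rw [e1, e2] at h1
        exact h1.trans (H (p a) m hm1 (by omega))
      set q : ℕ → Fin n := fun t => if t < a then p t else p (t + m) with hq
      have hq_le : ∀ t ≤ a, q t = p t := by
        intro t ht
        rcases lt_or_eq_of_le ht with h | h
        · simp [hq, h]
        · subst h
          simp only [hq, lt_irrefl, if_false]
          rw [← hb, ← hpab]
      have houter : W B q (a + r) = W B p a + W B (fun t => p (a + (m + t))) r := by
        rw [W_add]
        congr 1
        · exact W_congr B a hq_le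
        · apply Finset.sum_congr rfl
          intro t _
          have e1 : q (a + t) = p (a + (m + t)) := by
            simp only [hq, if_neg (by omega : ¬ a + t < a)]
            congr 1; omega
          have e2 : q (a + (t + 1)) = p (a + (m + (t + 1))) := by
            simp only [hq, if_neg (by omega : ¬ a + (t + 1) < a)]
            congr 1; omega
          simp only [e1, e2]
      have hq0 : q 0 = p 0 := hq_le 0 (Nat.zero_le a)
      have hqend : q (a + r) = p 0 := by
        simp only [hq, if_neg (by omega : ¬ a + r < a)]
        have : a + r + m = k := by omega
        rw [this, hpk]
      have houterle : W B q (a + r) ≤ 0 := by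
        apply ih (a + r) (by omega) q (by omega)
        rw [hqend, hq0]
      have hsplit : W B p k = W B q (a + r) + W B (fun t => p (a + t)) m := by
        rw [houter, hk', W_add, W_add]
        have : (fun t => (fun s => p (a + s)) (m + t)) = (fun t => p (a + (m + t))) := by
          funext t; rfl
        rw [this]
        ring_nf
        rw [add_comm (W B (fun t => p (a+t)) m), add_assoc]
      rw [hsplit]
      calc W B q (a + r) + W B (fun t => p (a + t)) m ≤ 0 + 0 :=
            add_le_add houterle hmid
        _ = 0 := by simp
    have hcard : Fintype.card (Fin n) < Fintype.card (Fin (n+1)) := by simp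
    obtain ⟨a, b, hab, heq⟩ :=
      Fintype.exists_ne_map_eq_of_card_lt (fun t : Fin (n+1) => p t) hcard
    rcases lt_or_gt_of_ne (fun h => hab (by exact_mod_cast Fin.ext h)) with h | h
    · exact key a b h (by omega) heq
    · exact key b a h (by omega) heq.symm

theorem inGamma_of_small {n : ℕ} (B : MPMat n) (hB : ∀ i j, B i j ≠ ⊤)
    (H : ∀ i : Fin n, ∀ k : ℕ, 1 ≤ k → k ≤ n → mpPow B k i i ≤ 0) : InGamma B := by
  intro i k hk
  apply pow_le_of_walks B hB k i i 0
  intro p hp0 hpk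
  exact closed_walk_le B H k p hk (by rw [hpk, hp0])

theorem mpPow_sm {n : ℕ} (A : MPMat n) (c : ℝ) :
    ∀ (k : ℕ) (i j : Fin n), mpPow (sm c A) k i j = (((k : ℝ) * c : ℝ) : EReal) + mpPow A k i j := by
  intro k
  induction k with
  | zero => intro i j; simp [mpPow]
  | succ k ih =>
    intro i j
    show (⨆ l, sm c A i l + mpPow (sm c A) k l j) = _
    have key : ∀ l, sm c A i l + mpPow (sm c A) k l j
        = ((((k:ℝ)+1) * c : ℝ) : EReal) + (A i l + mpPow A k l j) := by
      intro l
      rw [ih]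
      show ((c:EReal) + A i l) + ((((k:ℝ) * c : ℝ):EReal) + mpPow A k l j) = _
      rw [add_add_add_comm, ← EReal.coe_add]
      congr 2
      ring
    simp_rw [key]
    rw [← ereal_add_iSup]
    rw [show (((k+1 : ℕ) : ℝ) * c : ℝ) = (((k:ℝ)+1) * c) by push_cast; ring]
    rfl

theorem edivNat_le_iff {k : ℕ} (hk : 1 ≤ k) (x : EReal) (c : ℝ) :
    edivNat x k ≤ (c : EReal) ↔ x ≤ (((k:ℝ) * c : ℝ) : EReal) := by
  unfold edivNat
  split_ifs with h1 h2
  · subst h1; simp only [top_le_iff, EReal.coe_ne_top]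
  · subst h2; simp
  · obtain ⟨y, rfl⟩ : ∃ y : ℝ, x = (y : EReal) :=
      ⟨x.toReal, (EReal.coe_toReal h1 h2).symm⟩
    rw [EReal.toReal_coe, EReal.coe_le_coe_iff, EReal.coe_le_coe_iff]
    rw [div_le_iff₀ (by positivity : (0:ℝ) < (k:ℝ))]
    constructor <;> intro <;> linarith

theorem mcm_le_iff {n : ℕ} (A : MPMat n) (C : EReal) :
    mcm A ≤ C ↔ ∀ k, 1 ≤ k → k ≤ n → ∀ i : Fin n, edivNat (mpPow A k i i) k ≤ C := by
  unfold mcm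
  simp only [iSup_le_iff, Finset.mem_Icc]
  constructor
  · intro h k h1 h2 i; exact h k ⟨h1, h2⟩ i
  · intro h k hk i; exact h k hk.1 hk.2 i

theorem key_iff {n : ℕ} (A : MPMat n) (hA : ∀ i j, A i j ≠ ⊤) (c : ℝ) :
    InGamma (sm c A) ↔ mcm A ≤ ((-c : ℝ) : EReal) := by
  have hdiag : ∀ k : ℕ, 1 ≤ k → ∀ i : Fin n,
      (mpPow (sm c A) k i i ≤ 0 ↔ edivNat (mpPow A k i i) k ≤ ((-c:ℝ):EReal)) := by
    intro k hk i
    rw [edivNat_le_iff hk, mpPow_sm A c k i i, ereal_real_add_le_iff ((k:ℝ)*c)]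
    rw [add_zero]
    constructor <;> intro h <;> refine le_trans h (le_of_eq ?_) <;> norm_cast <;> ring
  rw [mcm_le_iff]
  constructor
  · intro h k h1 h2 i
    exact (hdiag k h1 i).mp (h i k h1)
  · intro h
    apply inGamma_of_small
    · intro i j; exact ereal_coe_add_ne_top c (hA i j)
    · intro i k h1 h2
      exact (hdiag k h1 i).mpr (h k h1 h2 i)

/-- for a matrix with no `+∞` entry and real `λ`:
`G(λA) ∈ Γ ↔ λ ≤ -mcm(A)` and `G(λ⁻¹A) ∈ Γ ↔ λ ≥ mcm(A)`. -/
theorem stmt6 {n : ℕ} (A : MPMat n) (hA : ∀ i j, A i j ≠ ⊤) (lam : ℝ) :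
    (InGamma (sm lam A) ↔ (lam : EReal) ≤ -mcm A) ∧
    (InGamma (sm (-lam) A) ↔ mcm A ≤ (lam : EReal)) := by
  constructor
  · rw [key_iff A hA lam]
    rw [EReal.coe_neg]
    exact ⟨fun h => EReal.le_neg_of_le_neg h, fun h => EReal.le_neg_of_le_neg h⟩
  · rw [key_iff A hA (-lam), neg_neg]

end NCP
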